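/- Closed form for the Haar wavelet: with ψ the Haar function (ψ = 1 on [0,1/2), ψ = −1 on [1/2,1], 0 elsewhere) and f(t) = e^{−iAt²/(2B)}, the special affine wavelet transform equals W^M_ψ[f](a,b) = (√(iB)/√(2πa)) · (1/(a−p)) · exp{(i/(2B))(−2a(Dp−Bq) + D(a²+p²))} · exp{ib(p−a)/B} · [2 exp{ia(p−a)/(2B)} − 1 − exp{ia(p−a)/B}], provided p ≠ a. -/

import Mathlib

open MeasureTheory Complex

/-- The continuous special affine wavelet transform (explicit integral form). -/
noncomputable def W19 (A B D p q : ℝ) (ψ f : ℝ → ℂ) (a b : ℝ) : ℂ :=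
  (((2 * Real.pi * Complex.I * (B:ℂ) * (a:ℂ)) ^ ((1:ℂ)/2)))⁻¹ *
    ∫ t : ℝ, f t * starRingEnd ℂ (ψ ((t-b)/a)) *
      Complex.exp ((Complex.I / (2*(B:ℂ))) *
        ((A*t^2 + 2*t*(p-a) - 2*a*(D*p - B*q) + D*(a^2+p^2) : ℝ) : ℂ))

/-- The Haar wavelet. -/
noncomputable def haar (t : ℝ) : ℂ :=
  if 0 ≤ t ∧ t < 1/2 then 1 else if 1/2 ≤ t ∧ t ≤ 1 then -1 else 0

lemma haar_conj (t : ℝ) : starRingEnd ℂ (haar t) = haar t := by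
  unfold haar; split_ifs <;> simp

lemma haar_split (a b : ℝ) (ha : 0 < a) (c : ℂ) (t : ℝ) :
    haar ((t-b)/a) * Complex.exp (c * t)
      = (Set.Ico b (b+a/2)).indicator (fun t : ℝ => Complex.exp (c * (t:ℝ))) t
        + (Set.Icc (b+a/2) (b+a)).indicator (fun t : ℝ => -Complex.exp (c * (t:ℝ))) t := by
  have e1 : (0:ℝ) ≤ (t-b)/a ↔ b ≤ t := by
    rw [le_div_iff₀ ha]; constructor <;> intro <;> linarith
  have e2 : (t-b)/a < 1/2 ↔ t < b + a/2 := by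
    rw [div_lt_iff₀ ha]; constructor <;> intro <;> linarith
  have e3 : (1:ℝ)/2 ≤ (t-b)/a ↔ b + a/2 ≤ t := by
    rw [le_div_iff₀ ha]; constructor <;> intro <;> linarith
  have e4 : (t-b)/a ≤ 1 ↔ t ≤ b + a := by
    rw [div_le_iff₀ ha]; constructor <;> intro <;> linarith
  simp only [haar, Set.indicator_apply, Set.mem_Ico, Set.mem_Icc, e1, e2, e3, e4]
  split_ifs <;> simp_all <;> linarith

lemma haar_integral (a b : ℝ) (ha : 0 < a) (c : ℂ) (hc : c ≠ 0) :
    ∫ t : ℝ, haar ((t-b)/a) * Complex.exp (c * t)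
      = (2*Complex.exp (c*(b+a/2)) - Complex.exp (c*b) - Complex.exp (c*(b+a)))/c := by
  have hcont : Continuous fun t : ℝ => Complex.exp (c * (t:ℝ)) :=
    Complex.continuous_exp.comp (continuous_const.mul Complex.continuous_ofReal)
  have hi1 : Integrable ((Set.Ico b (b+a/2)).indicator (fun t : ℝ => Complex.exp (c * (t:ℝ)))) := by
    rw [integrable_indicator_iff measurableSet_Ico]
    exact hcont.integrableOn_Icc.mono_set Set.Ico_subset_Icc_self
  have hi2 : Integrable ((Set.Icc (b+a/2) (b+a)).indicator (fun t : ℝ => -Complex.exp (c * (t:ℝ)))) := by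
    rw [integrable_indicator_iff measurableSet_Icc]
    exact hcont.neg.integrableOn_Icc
  have h1 : b ≤ b + a/2 := by linarith
  have h2 : b + a/2 ≤ b + a := by linarith
  calc ∫ t : ℝ, haar ((t-b)/a) * Complex.exp (c * t)
      = ∫ t : ℝ, ((Set.Ico b (b+a/2)).indicator (fun t : ℝ => Complex.exp (c * (t:ℝ))) t
          + (Set.Icc (b+a/2) (b+a)).indicator (fun t : ℝ => -Complex.exp (c * (t:ℝ))) t) :=
        integral_congr_ae (Filter.Eventually.of_forall (haar_split a b ha c))
    _ = (∫ t in Set.Ico b (b+a/2), Complex.exp (c * (t:ℝ)))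
        + ∫ t in Set.Icc (b+a/2) (b+a), -Complex.exp (c * (t:ℝ)) := by
        rw [integral_add hi1 hi2, integral_indicator measurableSet_Ico,
          integral_indicator measurableSet_Icc]
    _ = (Complex.exp (c*(b+a/2)) - Complex.exp (c*b))/c
        - (Complex.exp (c*(b+a)) - Complex.exp (c*(b+a/2)))/c := by
        rw [setIntegral_congr_set Ico_ae_eq_Ioc, ← intervalIntegral.integral_of_le h1,
          integral_exp_mul_complex hc, MeasureTheory.integral_Icc_eq_integral_Ioc,
          ← intervalIntegral.integral_of_le h2, intervalIntegral.integral_neg,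
          integral_exp_mul_complex hc]
        push_cast
        ring
    _ = (2*Complex.exp (c*(b+a/2)) - Complex.exp (c*b) - Complex.exp (c*(b+a)))/c := by
        ring

lemma cpow_half_fact (B a : ℝ) (hB : B ≠ 0) (ha : 0 < a) :
    (2*(Real.pi:ℂ)*Complex.I*(B:ℂ)*(a:ℂ)) ^ ((1:ℂ)/2)
      = ((Real.sqrt (2*Real.pi*a) : ℝ) : ℂ) * (Complex.I*(B:ℂ)) ^ ((1:ℂ)/2) := by
  have hIB : Complex.I * (B:ℂ) ≠ 0 := mul_ne_zero Complex.I_ne_zero (ofReal_ne_zero.2 hB)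
  have hr : (0:ℝ) < 2*Real.pi*a := by positivity
  have h1 : (2*(Real.pi:ℂ)*Complex.I*(B:ℂ)*(a:ℂ)) = ((2*Real.pi*a : ℝ):ℂ) * (Complex.I*(B:ℂ)) := by
    push_cast; ring
  rw [h1, Complex.cpow_def_of_ne_zero (mul_ne_zero (ofReal_ne_zero.2 hr.ne') hIB),
    Complex.log_ofReal_mul hr hIB, Complex.cpow_def_of_ne_zero hIB, add_mul, Complex.exp_add]
  congr 1
  rw [show ((Real.log (2*Real.pi*a) : ℂ)) * (1/2) = ((Real.log (2*Real.pi*a) * (1/2) : ℝ) : ℂ) by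
    push_cast; ring, ← Complex.ofReal_exp]
  norm_cast
  rw [Real.sqrt_eq_rpow, Real.rpow_def_of_pos hr]

lemma cpow_half_sq (B : ℝ) (hB : B ≠ 0) :
    (Complex.I*(B:ℂ)) ^ ((1:ℂ)/2) * (Complex.I*(B:ℂ)) ^ ((1:ℂ)/2) = Complex.I*(B:ℂ) := by
  have hIB : Complex.I * (B:ℂ) ≠ 0 := mul_ne_zero Complex.I_ne_zero (ofReal_ne_zero.2 hB)
  rw [← Complex.cpow_add _ _ hIB]
  norm_num

lemma coeff_identity (B a p : ℝ) (ha : 0 < a) (hpa : p ≠ a)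
    (s : ℂ) (hsq : s * s = Complex.I * (B:ℂ))
    (c : ℂ) (hcB : c * (B:ℂ) = Complex.I * ((p:ℂ) - (a:ℂ)))
    (hs : s ≠ 0) (hc : c ≠ 0) :
    ((((Real.sqrt (2*Real.pi*a)) : ℝ):ℂ) * s)⁻¹ / c
      = s / (((Real.sqrt (2*Real.pi*a)) : ℝ):ℂ) * (((a - p : ℝ):ℂ))⁻¹ := by
  have hpac : ((a - p : ℝ):ℂ) ≠ 0 := ofReal_ne_zero.2 (sub_ne_zero.2 (Ne.symm hpa))
  have hap : (a:ℂ) - p ≠ 0 := by push_cast at hpac; exact hpac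
  field_simp
  congr 1
  push_cast
  linear_combination (-c)*hsq - Complex.I*hcB + ((a:ℂ)-p)*Complex.I_sq

set_option maxHeartbeats 1000000 in
/-- Closed form of the special affine wavelet transform of the chirp
f(t) = e^{−iAt²/(2B)} with the Haar window. -/
theorem sawt_haar_chirp (A B C D p q : ℝ) (hM : A*D - B*C = 1) (hB : B ≠ 0)
    (a b : ℝ) (ha : 0 < a) (hpa : p ≠ a) :
    W19 A B D p q haar
        (fun t => Complex.exp (-Complex.I * (A:ℂ) * (t:ℂ)^2 / (2*(B:ℂ)))) a b
      = ((Complex.I * (B:ℂ)) ^ ((1:ℂ)/2) / ((Real.sqrt (2 * Real.pi * a) : ℝ) : ℂ)) *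
        (((a - p : ℝ) : ℂ))⁻¹ *
        Complex.exp ((Complex.I / (2*(B:ℂ))) *
          ((-2*a*(D*p - B*q) + D*(a^2+p^2) : ℝ) : ℂ)) *
        Complex.exp (Complex.I * ((b*(p-a)/B : ℝ) : ℂ)) *
        (2 * Complex.exp (Complex.I * ((a*(p-a)/(2*B) : ℝ) : ℂ)) - 1
          - Complex.exp (Complex.I * ((a*(p-a)/B : ℝ) : ℂ))) := by
  have hBc : (B:ℂ) ≠ 0 := ofReal_ne_zero.2 hB
  set c : ℂ := Complex.I * (((p - a)/B : ℝ) : ℂ) with hcdef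
  have hc : c ≠ 0 :=
    mul_ne_zero Complex.I_ne_zero (ofReal_ne_zero.2 (div_ne_zero (sub_ne_zero.2 hpa) hB))
  set K : ℂ := Complex.exp ((Complex.I / (2*(B:ℂ))) *
    ((-2*a*(D*p - B*q) + D*(a^2+p^2) : ℝ) : ℂ)) with hK
  have hpt : ∀ t : ℝ,
      Complex.exp (-Complex.I * (A:ℂ) * (t:ℂ)^2 / (2*(B:ℂ))) * starRingEnd ℂ (haar ((t-b)/a)) *
        Complex.exp ((Complex.I / (2*(B:ℂ))) *
          ((A*t^2 + 2*t*(p-a) - 2*a*(D*p - B*q) + D*(a^2+p^2) : ℝ) : ℂ))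
      = K * (haar ((t-b)/a) * Complex.exp (c * t)) := by
    intro t
    rw [haar_conj]
    have hE : Complex.exp (-Complex.I * (A:ℂ) * (t:ℂ)^2 / (2*(B:ℂ))) *
        Complex.exp ((Complex.I / (2*(B:ℂ))) *
          ((A*t^2 + 2*t*(p-a) - 2*a*(D*p - B*q) + D*(a^2+p^2) : ℝ) : ℂ))
        = K * Complex.exp (c * t) := by
      rw [hK, hcdef, ← Complex.exp_add, ← Complex.exp_add]
      congr 1
      push_cast
      field_simp
      ring
    calc Complex.exp (-Complex.I * (A:ℂ) * (t:ℂ)^2 / (2*(B:ℂ))) * haar ((t-b)/a) *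
          Complex.exp ((Complex.I / (2*(B:ℂ))) *
            ((A*t^2 + 2*t*(p-a) - 2*a*(D*p - B*q) + D*(a^2+p^2) : ℝ) : ℂ))
        = haar ((t-b)/a) * (Complex.exp (-Complex.I * (A:ℂ) * (t:ℂ)^2 / (2*(B:ℂ))) *
            Complex.exp ((Complex.I / (2*(B:ℂ))) *
              ((A*t^2 + 2*t*(p-a) - 2*a*(D*p - B*q) + D*(a^2+p^2) : ℝ) : ℂ))) := by ring
      _ = K * (haar ((t-b)/a) * Complex.exp (c * t)) := by rw [hE]; ring
  have hint : (∫ t : ℝ,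
      (fun t : ℝ => Complex.exp (-Complex.I * (A:ℂ) * (t:ℂ)^2 / (2*(B:ℂ)))) t *
        starRingEnd ℂ (haar ((t-b)/a)) *
        Complex.exp ((Complex.I / (2*(B:ℂ))) *
          ((A*t^2 + 2*t*(p-a) - 2*a*(D*p - B*q) + D*(a^2+p^2) : ℝ) : ℂ)))
      = K * ((2*Complex.exp (c*(b+a/2)) - Complex.exp (c*b) - Complex.exp (c*(b+a)))/c) := by
    rw [integral_congr_ae (Filter.Eventually.of_forall hpt), integral_const_mul,
      haar_integral a b ha c hc]
  unfold W19
  rw [hint]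
  -- rewrite the exponentials
  have eb : Complex.exp (Complex.I * ((b*(p-a)/B : ℝ) : ℂ)) = Complex.exp (c * b) := by
    congr 1; rw [hcdef]; push_cast; field_simp
  have eh : Complex.exp (c*(b+a/2))
      = Complex.exp (c*b) * Complex.exp (Complex.I * ((a*(p-a)/(2*B) : ℝ) : ℂ)) := by
    rw [← Complex.exp_add]; congr 1; rw [hcdef]; push_cast; field_simp
  have ea : Complex.exp (c*(b+a))
      = Complex.exp (c*b) * Complex.exp (Complex.I * ((a*(p-a)/B : ℝ) : ℂ)) := by
    rw [← Complex.exp_add]; congr 1; rw [hcdef]; push_cast; field_simp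
  rw [eb, eh, ea, cpow_half_fact B a hB ha]
  have hsq := cpow_half_sq B hB
  set s : ℂ := (Complex.I*(B:ℂ)) ^ ((1:ℂ)/2) with hs0
  have hIB : Complex.I * (B:ℂ) ≠ 0 := mul_ne_zero Complex.I_ne_zero hBc
  have hs : s ≠ 0 := by intro h; rw [h, zero_mul] at hsq; exact hIB hsq.symm
  have hcB : c * (B:ℂ) = Complex.I * ((p:ℂ) - (a:ℂ)) := by
    rw [hcdef]; push_cast; field_simp
  have key := coeff_identity B a p ha hpa s hsq c hcB hs hc
  trans (((((Real.sqrt (2*Real.pi*a)) : ℝ):ℂ) * s)⁻¹ / c) *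
    (K * Complex.exp (c*(b:ℂ)) *
      (2 * Complex.exp (Complex.I * ((a*(p-a)/(2*B) : ℝ) : ℂ)) - 1
        - Complex.exp (Complex.I * ((a*(p-a)/B : ℝ) : ℂ))))
  · ring
  rw [key]
  ring
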